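/- Let u, v, t be distinct points with v ∈ C_u^i, t ∈ C_u^i, and ‖uv‖_hex ≤ ‖ut‖_hex (i.e., v ∈ ∇_u^t). If u ∈ C_t^j for some j ∈ ℤ/6, then v ∈ C_t^{j−1} ∪ C_t^j ∪ C_t^{j+1}. -/

import Mathlib

open Real

/-- Hexagonal norm: unit disk is the regular hexagon with east/west vertices (±1,0). -/
noncomputable def hexNorm (p : ℝ × ℝ) : ℝ :=
  max (2 * |p.2| / Real.sqrt 3) (max |p.1 + p.2 / Real.sqrt 3| |p.1 - p.2 / Real.sqrt 3|)

/-- Tipped hexagonal norm: unit disk is the regular hexagon with north/south vertices (0, ±2/√3). -/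
noncomputable def thexNorm (p : ℝ × ℝ) : ℝ :=
  max |p.1| (max (|p.1 + Real.sqrt 3 * p.2| / 2) (|p.1 - Real.sqrt 3 * p.2| / 2))

/-- Euclidean norm of a planar vector. -/
noncomputable def eucNorm (p : ℝ × ℝ) : ℝ := Real.sqrt (p.1 ^ 2 + p.2 ^ 2)

/-- Rotation of a planar vector by angle θ (counterclockwise). -/
noncomputable def rot (θ : ℝ) (p : ℝ × ℝ) : ℝ × ℝ :=
  (Real.cos θ * p.1 - Real.sin θ * p.2, Real.sin θ * p.1 + Real.cos θ * p.2)

/-- The cone of directions pointing straight down (spanning 60°), bounded by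
lines of slopes √3 and -√3 through the origin. -/
def cone0 : Set (ℝ × ℝ) := {v | v.2 ≤ 0 ∧ Real.sqrt 3 * |v.1| ≤ -v.2}

/-- Coordinates of q in the frame of the i-th cone of p (cone rotated back to cone0). -/
noncomputable def localCoord (p : ℝ × ℝ) (i : ZMod 6) (q : ℝ × ℝ) : ℝ × ℝ :=
  rot (-((i.val : ℝ) * (Real.pi / 3))) (q - p)

/-- The closed cone `C_p^i`: the six cones about p determined by the lines of
slopes -√3, 0, √3 through p, labeled counterclockwise with `C_p^0` directly below p. -/
def cone (p : ℝ × ℝ) (i : ZMod 6) : Set (ℝ × ℝ) :=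
  {q | localCoord p i q ∈ cone0}

/-- The triangle `∇_u^v`: points of the cone of u containing v whose hex-distance
to u is at most that of v. -/
def nabla (u v : ℝ × ℝ) : Set (ℝ × ℝ) :=
  {r | hexNorm (r - u) ≤ hexNorm (v - u) ∧ ∀ i : ZMod 6, v ∈ cone u i → r ∈ cone u i}

/-- Side length of an equilateral triangle with sides of slopes -√3, 0, √3,
realized as its diameter in the hexagonal norm. -/
noncomputable def sideLen (T : Set (ℝ × ℝ)) : ℝ :=
  sSup ((fun pq : (ℝ × ℝ) × (ℝ × ℝ) => hexNorm (pq.1 - pq.2)) '' (T ×ˢ T))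

/-- General position: no two points lie on a common line of slope -√3, 0 or √3. -/
def genPos (P : Finset (ℝ × ℝ)) : Prop :=
  ∀ p ∈ P, ∀ q ∈ P, p ≠ q →
    p.2 ≠ q.2 ∧ p.2 - q.2 ≠ Real.sqrt 3 * (p.1 - q.1) ∧
      p.2 - q.2 ≠ -(Real.sqrt 3) * (p.1 - q.1)

/-- Edge of the directed Theta-6 graph of P: from u to v exactly when the interior
of `∇_u^v` contains no point of P. -/
def isEdge (P : Finset (ℝ × ℝ)) (u v : ℝ × ℝ) : Prop :=
  u ∈ P ∧ v ∈ P ∧ u ≠ v ∧ ∀ p ∈ P, p ∉ interior (nabla u v)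

/-- A directed path in the Theta-6 graph of P from s to t, given as its list of vertices. -/
def isPath (P : Finset (ℝ × ℝ)) (ℓ : List (ℝ × ℝ)) (s t : ℝ × ℝ) : Prop :=
  ℓ ≠ [] ∧ ℓ.head? = some s ∧ ℓ.getLast? = some t ∧ ℓ.Chain' (isEdge P)

/-- Euclidean length of a path. -/
noncomputable def pathLen (ℓ : List (ℝ × ℝ)) : ℝ :=
  ((ℓ.zip ℓ.tail).map (fun pq => eucNorm (pq.2 - pq.1))).sum


section AuxABB
open Real

lemma sqrt3_pos : (0:ℝ) < Real.sqrt 3 := by positivity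
lemma sqrt3_sq : Real.sqrt 3 * Real.sqrt 3 = 3 := Real.mul_self_sqrt (by norm_num)

lemma rot_rot (θ₁ θ₂ : ℝ) (p : ℝ × ℝ) : rot θ₁ (rot θ₂ p) = rot (θ₁+θ₂) p := by
  simp only [rot, Real.cos_add, Real.sin_add, Prod.mk.injEq]
  constructor <;> ring

lemma rot_zero (p : ℝ × ℝ) : rot 0 p = p := by simp [rot]

lemma rot_zero_vec (θ : ℝ) : rot θ (0 : ℝ × ℝ) = 0 := by
  simp [rot, Prod.ext_iff]

lemma rot_period (θ : ℝ) (n : ℤ) (p : ℝ × ℝ) : rot (θ + n*(2*π)) p = rot θ p := by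
  simp [rot, Real.cos_add_int_mul_two_pi, Real.sin_add_int_mul_two_pi]

lemma rot_sub (θ : ℝ) (p q : ℝ × ℝ) : rot θ (p - q) = rot θ p - rot θ q := by
  simp only [rot, Prod.mk_sub_mk, Prod.fst_sub, Prod.snd_sub, Prod.mk.injEq]
  constructor <;> ring

lemma rot_eq_zero_iff (θ : ℝ) (p : ℝ × ℝ) : rot θ p = 0 ↔ p = 0 := by
  constructor
  · intro h
    have h2 := congrArg (rot (-θ)) h
    rwa [rot_rot, neg_add_cancel, rot_zero, rot_zero_vec] at h2
  · rintro rfl; exact rot_zero_vec θ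

lemma cos1 : Real.cos (1*(π/3)) = 1/2 := by rw [one_mul, Real.cos_pi_div_three]
lemma sin1 : Real.sin (1*(π/3)) = Real.sqrt 3/2 := by rw [one_mul, Real.sin_pi_div_three]
lemma cos2 : Real.cos (2*(π/3)) = -(1/2) := by
  rw [show 2*(π/3) = π - π/3 by ring, Real.cos_pi_sub, Real.cos_pi_div_three]
lemma sin2 : Real.sin (2*(π/3)) = Real.sqrt 3/2 := by
  rw [show 2*(π/3) = π - π/3 by ring, Real.sin_pi_sub, Real.sin_pi_div_three]
lemma cos3 : Real.cos (3*(π/3)) = -1 := by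
  rw [show 3*(π/3) = π by ring, Real.cos_pi]
lemma sin3 : Real.sin (3*(π/3)) = 0 := by
  rw [show 3*(π/3) = π by ring, Real.sin_pi]
lemma cos4 : Real.cos (4*(π/3)) = -(1/2) := by
  rw [show 4*(π/3) = π + π/3 by ring, Real.cos_add]
  simp [Real.cos_pi_div_three]
lemma sin4 : Real.sin (4*(π/3)) = -(Real.sqrt 3/2) := by
  rw [show 4*(π/3) = π + π/3 by ring, Real.sin_add]
  simp [Real.sin_pi_div_three]
lemma cos5 : Real.cos (5*(π/3)) = 1/2 := by
  rw [show 5*(π/3) = 2*π - π/3 by ring, Real.cos_sub]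
  simp [Real.cos_pi_div_three, Real.cos_two_pi, Real.sin_two_pi]
lemma sin5 : Real.sin (5*(π/3)) = -(Real.sqrt 3/2) := by
  rw [show 5*(π/3) = 2*π - π/3 by ring, Real.sin_sub]
  simp [Real.sin_pi_div_three, Real.cos_two_pi, Real.sin_two_pi]

lemma rotk0 (z : ℝ × ℝ) : rot (-((0:ℝ)*(π/3))) z = z := by
  norm_num; exact rot_zero z
lemma rotk1 (z : ℝ × ℝ) : rot (-((1:ℝ)*(π/3))) z =
    (z.1/2 + Real.sqrt 3/2*z.2, -(Real.sqrt 3/2)*z.1 + z.2/2) := by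
  simp only [rot, Real.cos_neg, Real.sin_neg, cos1, sin1, Prod.mk.injEq]
  constructor <;> ring
lemma rotk2 (z : ℝ × ℝ) : rot (-((2:ℝ)*(π/3))) z =
    (-(z.1/2) + Real.sqrt 3/2*z.2, -(Real.sqrt 3/2)*z.1 - z.2/2) := by
  simp only [rot, Real.cos_neg, Real.sin_neg, cos2, sin2, Prod.mk.injEq]
  constructor <;> ring
lemma rotk3 (z : ℝ × ℝ) : rot (-((3:ℝ)*(π/3))) z = (-z.1, -z.2) := by
  simp only [rot, Real.cos_neg, Real.sin_neg, cos3, sin3, Prod.mk.injEq]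
  constructor <;> ring
lemma rotk4 (z : ℝ × ℝ) : rot (-((4:ℝ)*(π/3))) z =
    (-(z.1/2) - Real.sqrt 3/2*z.2, Real.sqrt 3/2*z.1 - z.2/2) := by
  simp only [rot, Real.cos_neg, Real.sin_neg, cos4, sin4, Prod.mk.injEq]
  constructor <;> ring
lemma rotk5 (z : ℝ × ℝ) : rot (-((5:ℝ)*(π/3))) z =
    (z.1/2 - Real.sqrt 3/2*z.2, Real.sqrt 3/2*z.1 + z.2/2) := by
  simp only [rot, Real.cos_neg, Real.sin_neg, cos5, sin5, Prod.mk.injEq]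
  constructor <;> ring

lemma div_sqrt3 (x : ℝ) : x / Real.sqrt 3 = Real.sqrt 3 * x / 3 := by
  rw [div_eq_div_iff sqrt3_pos.ne' (by norm_num : (3:ℝ) ≠ 0)]
  linear_combination (-x) * sqrt3_sq

lemma neg_coef (x : ℝ) : -(2/Real.sqrt 3) * x = -(Real.sqrt 3 * (2*x))/3 := by
  field_simp
  linear_combination x * sqrt3_sq

lemma hex_lower (z : ℝ × ℝ) (k : ℕ) (hk : k < 6) :
    -(2/Real.sqrt 3) * (rot (-((k:ℝ)*(π/3))) z).2 ≤ hexNorm z := by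
  unfold hexNorm
  have h3 := sqrt3_sq
  have hp := sqrt3_pos
  interval_cases k <;> push_cast
  · rw [rotk0]
    refine le_trans ?_ (le_max_left _ _)
    rw [neg_coef, div_sqrt3]
    have := neg_abs_le z.2
    nlinarith [abs_nonneg z.2]
  · rw [rotk1]
    refine le_trans (le_of_eq ?_) (le_trans (le_abs_self _) (le_trans (le_max_right _ _) (le_max_right _ _)))
    field_simp
    ring
  · rw [rotk2]
    refine le_trans (le_of_eq ?_) (le_trans (le_abs_self _) (le_trans (le_max_left _ _) (le_max_right _ _)))
    field_simp
    ring
  · rw [rotk3]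
    refine le_trans ?_ (le_max_left _ _)
    rw [show ((-z.1, -z.2) : ℝ × ℝ).2 = -z.2 from rfl, neg_coef, div_sqrt3]
    have := le_abs_self z.2
    nlinarith [abs_nonneg z.2]
  · rw [rotk4]
    refine le_trans (le_of_eq ?_) (le_trans (neg_le_abs _) (le_trans (le_max_right _ _) (le_max_right _ _)))
    field_simp
  · rw [rotk5]
    refine le_trans (le_of_eq ?_) (le_trans (neg_le_abs _) (le_trans (le_max_left _ _) (le_max_right _ _)))
    field_simp

lemma absmul (A B : ℝ) (h : Real.sqrt 3 * |A| ≤ B) :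
    3*A ≤ Real.sqrt 3*B ∧ -(3*A) ≤ Real.sqrt 3*B := by
  have h' := mul_le_mul_of_nonneg_left h sqrt3_pos.le
  rw [← mul_assoc, sqrt3_sq] at h'
  constructor
  · linarith [le_abs_self A]
  · linarith [neg_abs_le A]

set_option maxHeartbeats 2000000 in
lemma hex_upper (z : ℝ × ℝ) (k : ℕ) (hk : k < 6)
    (h : rot (-((k:ℝ)*(π/3))) z ∈ cone0) :
    hexNorm z ≤ -(2/Real.sqrt 3) * (rot (-((k:ℝ)*(π/3))) z).2 := by
  have h3 := sqrt3_sq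
  have hp := sqrt3_pos
  unfold hexNorm
  interval_cases k <;> push_cast at h ⊢ <;>
    [rw [rotk0] at h ⊢; rw [rotk1] at h ⊢; rw [rotk2] at h ⊢; rw [rotk3] at h ⊢;
     rw [rotk4] at h ⊢; rw [rotk5] at h ⊢] <;>
  · obtain ⟨h1, h2⟩ := h
    try dsimp only at h1 h2 ⊢
    try rw [abs_neg] at h2
    obtain ⟨hA1, hA2⟩ := absmul _ _ h2
    rw [neg_coef, div_sqrt3, div_sqrt3]
    refine max_le ?_ (max_le ?_ ?_)
    · rcases abs_cases z.2 with ⟨e2,s2⟩|⟨e2,s2⟩ <;> rw [e2] <;>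
        nlinarith [h3, hp, h1, hA1, hA2, s2]
    · rw [abs_le]
      constructor <;> nlinarith [h3, hp, h1, hA1, hA2]
    · rw [abs_le]
      constructor <;> nlinarith [h3, hp, h1, hA1, hA2]

lemma smul_abs (X : ℝ) : Real.sqrt 3 * |X| = |Real.sqrt 3 * X| := by
  rw [abs_mul, abs_of_pos sqrt3_pos]

lemma mem_cone_zero (n : ZMod 6) (w : ℝ × ℝ) :
    w ∈ cone 0 n ↔ rot (-((n.val:ℝ) * (π/3))) w ∈ cone0 := by
  simp only [cone, localCoord, Set.mem_setOf_eq, sub_zero]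

lemma mem0 (w : ℝ × ℝ) : w ∈ cone 0 0 ↔
    (w.2 ≤ 0 ∧ |Real.sqrt 3*w.1| ≤ -w.2) := by
  rw [mem_cone_zero, show (((0:ZMod 6).val:ℝ)) = (0:ℝ) by norm_num [show (0:ZMod 6).val = 0 from rfl],
    rotk0]
  simp only [cone0, Set.mem_setOf_eq]
  rw [abs_mul, abs_of_pos sqrt3_pos]

lemma mem1 (w : ℝ × ℝ) : w ∈ cone 0 1 ↔
    (-(Real.sqrt 3*w.1)/2 + w.2/2 ≤ 0 ∧
      |Real.sqrt 3*w.1/2 + 3*w.2/2| ≤ Real.sqrt 3*w.1/2 - w.2/2) := by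
  rw [mem_cone_zero, show (((1:ZMod 6).val:ℝ)) = (1:ℝ) by norm_num [show (1:ZMod 6).val = 1 from rfl],
    rotk1]
  simp only [cone0, Set.mem_setOf_eq]
  have e1 : Real.sqrt 3 * |w.1/2 + Real.sqrt 3/2*w.2| = |Real.sqrt 3*w.1/2 + 3*w.2/2| := by
    rw [smul_abs]
    congr 1
    linear_combination (w.2/2) * sqrt3_sq
  rw [e1]
  constructor <;> rintro ⟨p1, p2⟩ <;> exact ⟨by linarith, by linarith⟩

lemma mem2 (w : ℝ × ℝ) : w ∈ cone 0 2 ↔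
    (-(Real.sqrt 3*w.1)/2 - w.2/2 ≤ 0 ∧
      |-(Real.sqrt 3*w.1)/2 + 3*w.2/2| ≤ Real.sqrt 3*w.1/2 + w.2/2) := by
  rw [mem_cone_zero, show (((2:ZMod 6).val:ℝ)) = (2:ℝ) by norm_num [show (2:ZMod 6).val = 2 from rfl],
    rotk2]
  simp only [cone0, Set.mem_setOf_eq]
  have e1 : Real.sqrt 3 * |-(w.1/2) + Real.sqrt 3/2*w.2| = |-(Real.sqrt 3*w.1)/2 + 3*w.2/2| := by
    rw [smul_abs]
    congr 1
    linear_combination (w.2/2) * sqrt3_sq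
  rw [e1]
  constructor <;> rintro ⟨p1, p2⟩ <;> exact ⟨by linarith, by linarith⟩

lemma mem3 (w : ℝ × ℝ) : w ∈ cone 0 3 ↔
    (-w.2 ≤ 0 ∧ |Real.sqrt 3*w.1| ≤ w.2) := by
  rw [mem_cone_zero, show (((3:ZMod 6).val:ℝ)) = (3:ℝ) by norm_num [show (3:ZMod 6).val = 3 from rfl],
    rotk3]
  simp only [cone0, Set.mem_setOf_eq]
  rw [abs_neg, abs_mul, abs_of_pos sqrt3_pos]
  constructor <;> rintro ⟨p1, p2⟩ <;> exact ⟨by linarith, by linarith⟩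

lemma mem4 (w : ℝ × ℝ) : w ∈ cone 0 4 ↔
    (Real.sqrt 3*w.1/2 - w.2/2 ≤ 0 ∧
      |-(Real.sqrt 3*w.1)/2 - 3*w.2/2| ≤ -(Real.sqrt 3*w.1)/2 + w.2/2) := by
  rw [mem_cone_zero, show (((4:ZMod 6).val:ℝ)) = (4:ℝ) by norm_num [show (4:ZMod 6).val = 4 from rfl],
    rotk4]
  simp only [cone0, Set.mem_setOf_eq]
  have e1 : Real.sqrt 3 * |-(w.1/2) - Real.sqrt 3/2*w.2| = |-(Real.sqrt 3*w.1)/2 - 3*w.2/2| := by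
    rw [smul_abs]
    congr 1
    linear_combination (-(w.2/2)) * sqrt3_sq
  rw [e1]
  constructor <;> rintro ⟨p1, p2⟩ <;> exact ⟨by linarith, by linarith⟩

lemma mem5 (w : ℝ × ℝ) : w ∈ cone 0 5 ↔
    (Real.sqrt 3*w.1/2 + w.2/2 ≤ 0 ∧
      |Real.sqrt 3*w.1/2 - 3*w.2/2| ≤ -(Real.sqrt 3*w.1)/2 - w.2/2) := by
  rw [mem_cone_zero, show (((5:ZMod 6).val:ℝ)) = (5:ℝ) by norm_num [show (5:ZMod 6).val = 5 from rfl],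
    rotk5]
  simp only [cone0, Set.mem_setOf_eq]
  have e1 : Real.sqrt 3 * |w.1/2 - Real.sqrt 3/2*w.2| = |Real.sqrt 3*w.1/2 - 3*w.2/2| := by
    rw [smul_abs]
    congr 1
    linear_combination (-(w.2/2)) * sqrt3_sq
  rw [e1]
  constructor <;> rintro ⟨p1, p2⟩ <;> exact ⟨by linarith, by linarith⟩

lemma core (a b : ℝ × ℝ) (ha : a ∈ cone0) (hb : b ∈ cone0)
    (hb0 : b ≠ 0) (hab : b.2 ≤ a.2) (m : ZMod 6) (hm : -b ∈ cone 0 m) :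
    a - b ∈ cone 0 (m-1) ∪ cone 0 m ∪ cone 0 (m+1) := by
  obtain ⟨ha1, ha2⟩ := ha
  obtain ⟨hb1, hb2⟩ := hb
  rw [show Real.sqrt 3*|a.1| = |Real.sqrt 3*a.1| by rw [abs_mul, abs_of_pos sqrt3_pos]] at ha2
  rw [show Real.sqrt 3*|b.1| = |Real.sqrt 3*b.1| by rw [abs_mul, abs_of_pos sqrt3_pos]] at hb2
  obtain ⟨ha2l, ha2r⟩ := abs_le.mp ha2
  obtain ⟨hb2l, hb2r⟩ := abs_le.mp hb2
  have hbneg : b.2 < 0 := by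
    rcases lt_or_eq_of_le hb1 with h | h
    · exact h
    · exfalso
      apply hb0
      have h1 : Real.sqrt 3 * b.1 = 0 := le_antisymm (by linarith) (by linarith)
      have h2 : b.1 = 0 := by
        rcases mul_eq_zero.mp h1 with h' | h'
        · exact absurd h' sqrt3_pos.ne'
        · exact h'
      exact Prod.ext h2 h
  rcases (show ∀ x : ZMod 6, x = 0 ∨ x = 1 ∨ x = 2 ∨ x = 3 ∨ x = 4 ∨ x = 5 by decide) m
    with rfl|rfl|rfl|rfl|rfl|rfl
  · exfalso
    rw [mem0] at hm
    obtain ⟨hm1, _⟩ := hm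
    rw [Prod.snd_neg] at hm1
    linarith
  · exfalso
    rw [mem1] at hm
    obtain ⟨hm1, hm2⟩ := hm
    simp only [Prod.fst_neg, Prod.snd_neg] at hm1 hm2
    obtain ⟨hc1, hc2⟩ := abs_le.mp hm2
    linarith
  · rw [mem2] at hm
    obtain ⟨hm1, hm2⟩ := hm
    simp only [Prod.fst_neg, Prod.snd_neg] at hm1 hm2
    obtain ⟨hc1, hc2⟩ := abs_le.mp hm2
    have hsb : Real.sqrt 3 * b.1 = b.2 := by linarith
    rw [show (2:ZMod 6)-1 = 1 from by decide, show (2:ZMod 6)+1 = 3 from by decide]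
    rw [Set.mem_union, Set.mem_union, mem1, mem2, mem3]
    simp only [Prod.fst_sub, Prod.snd_sub]
    rcases le_total (a.2 - b.2) 0 with hw | hw
    · left; left
      refine ⟨by linarith, ?_⟩
      rw [abs_le]
      constructor <;> linarith
    · rcases le_total (Real.sqrt 3*(a.1-b.1)) (a.2-b.2) with hd | hd
      · right
        refine ⟨by linarith, ?_⟩
        rw [abs_le]
        constructor <;> linarith
      · left; right
        refine ⟨by linarith, ?_⟩
        rw [abs_le]
        constructor <;> linarith
  · rw [show (3:ZMod 6)-1 = 2 from by decide, show (3:ZMod 6)+1 = 4 from by decide]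
    rw [Set.mem_union, Set.mem_union, mem2, mem3, mem4]
    simp only [Prod.fst_sub, Prod.snd_sub]
    rcases le_total (Real.sqrt 3*(a.1-b.1)) (a.2-b.2) with hd | hd
    · rcases le_total (-(Real.sqrt 3*(a.1-b.1))) (a.2-b.2) with hd2 | hd2
      · left; right
        refine ⟨by linarith, ?_⟩
        rw [abs_le]
        constructor <;> linarith
      · right
        refine ⟨by linarith, ?_⟩
        rw [abs_le]
        constructor <;> linarith
    · left; left
      refine ⟨by linarith, ?_⟩
      rw [abs_le]
      constructor <;> linarith
  · rw [mem4] at hm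
    obtain ⟨hm1, hm2⟩ := hm
    simp only [Prod.fst_neg, Prod.snd_neg] at hm1 hm2
    obtain ⟨hc1, hc2⟩ := abs_le.mp hm2
    have hsb : Real.sqrt 3 * b.1 = -b.2 := by linarith
    rw [show (4:ZMod 6)-1 = 3 from by decide, show (4:ZMod 6)+1 = 5 from by decide]
    rw [Set.mem_union, Set.mem_union, mem3, mem4, mem5]
    simp only [Prod.fst_sub, Prod.snd_sub]
    rcases le_total (a.2 - b.2) 0 with hw | hw
    · right
      refine ⟨by linarith, ?_⟩
      rw [abs_le]
      constructor <;> linarith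
    · rcases le_total (-(Real.sqrt 3*(a.1-b.1))) (a.2-b.2) with hd | hd
      · left; left
        refine ⟨by linarith, ?_⟩
        rw [abs_le]
        constructor <;> linarith
      · left; right
        refine ⟨by linarith, ?_⟩
        rw [abs_le]
        constructor <;> linarith
  · exfalso
    rw [mem5] at hm
    obtain ⟨hm1, hm2⟩ := hm
    simp only [Prod.fst_neg, Prod.snd_neg] at hm1 hm2
    obtain ⟨hc1, hc2⟩ := abs_le.mp hm2
    linarith

lemma cone_iff (u t q : ℝ × ℝ) (i k : ZMod 6) :
    q ∈ cone t k ↔ (localCoord u i q - localCoord u i t) ∈ cone 0 (k - i) := by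
  have hsub : localCoord u i q - localCoord u i t = rot (-((i.val:ℝ) * (π/3))) (q - t) := by
    rw [localCoord, localCoord, ← rot_sub]
    congr 1
    abel
  obtain ⟨d, hd⟩ : ∃ d : ℕ, (k-i).val + i.val = k.val + 6*d := by
    have h2 := ZMod.val_add (k-i) i
    have h1 : (k - i) + i = k := by ring
    rw [h1] at h2
    exact ⟨((k-i).val + i.val)/6, by omega⟩
  have hc : (((k-i).val : ℝ)) = (k.val:ℝ) + 6*(d:ℝ) - (i.val:ℝ) := by
    have := congrArg (fun n : ℕ => (n : ℝ)) hd
    push_cast at this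
    linarith
  simp only [cone, Set.mem_setOf_eq]
  rw [hsub]
  simp only [localCoord]
  rw [sub_zero, rot_rot]
  rw [show -(((k-i).val:ℝ) * (π/3)) + -((i.val:ℝ) * (π/3))
      = -((k.val:ℝ) * (π/3)) + ((-(d:ℤ) : ℤ) : ℝ)*(2*π) by push_cast [hc]; ring]
  rw [rot_period]

end AuxABB

theorem stmt17 (u v t : ℝ × ℝ) (i j : ZMod 6)
    (huv : u ≠ v) (hut : u ≠ t) (hvt : v ≠ t)
    (hv : v ∈ cone u i) (ht : t ∈ cone u i)
    (hle : hexNorm (v - u) ≤ hexNorm (t - u))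
    (hu : u ∈ cone t j) :
    v ∈ cone t (j - 1) ∪ cone t j ∪ cone t (j + 1) := by
  have ha : localCoord u i v ∈ cone0 := hv
  have hb : localCoord u i t ∈ cone0 := ht
  have hb0 : localCoord u i t ≠ 0 := by
    intro h
    rw [localCoord, rot_eq_zero_iff, sub_eq_zero] at h
    exact hut h.symm
  have hval : i.val < 6 := ZMod.val_lt i
  have hlow := hex_lower (v - u) i.val hval
  have hup := hex_upper (t - u) i.val hval ht
  have hab : (localCoord u i t).2 ≤ (localCoord u i v).2 := by
    have h1 : -(2/Real.sqrt 3) * (localCoord u i v).2 ≤ hexNorm (v - u) := hlow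
    have h2 : hexNorm (t - u) ≤ -(2/Real.sqrt 3) * (localCoord u i t).2 := hup
    have key := le_trans h1 (le_trans hle h2)
    have h4 : (0:ℝ) < 2/Real.sqrt 3 := by positivity
    nlinarith [key, h4]
  have hm : -(localCoord u i t) ∈ cone 0 (j - i) := by
    have h := (cone_iff u t u i j).mp hu
    rwa [show localCoord u i u = 0 by rw [localCoord, sub_self]; exact rot_zero_vec _,
      zero_sub] at h
  have hcore := core (localCoord u i v) (localCoord u i t) ha hb hb0 hab (j - i) hm
  have e1 : j - 1 - i = j - i - 1 := by ring
  have e2 : j + 1 - i = j - i + 1 := by ring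
  simp only [Set.mem_union] at hcore ⊢
  rw [cone_iff u t v i (j-1), cone_iff u t v i j, cone_iff u t v i (j+1), e1, e2]
  exact hcore
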